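/- Let μ > 1 and h < 0, and let ξ¹, ξ² : ℝ² → ℝ be C² functions satisfying the Killing system for the metric g = (2/(x²+y²−2h)²)·diag(1, 1/μ) on all of ℝ². Then ξ¹ satisfies the second-order equation 2μ(x²+y²−2h)·∂²ξ¹/∂y²(x,y) − 4μy·∂ξ¹/∂y(x,y) + 4ξ¹(x,y) = 0 for all (x,y) ∈ ℝ², and ξ² satisfies (2/μ)(x²+y²−2h)·∂²ξ²/∂x²(x,y) − (4/μ)x·∂ξ²/∂x(x,y) + 4ξ²(x,y) = 0 for all (x,y) ∈ ℝ². -/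

import Mathlib

/-- Partial derivative in the first variable of a curried function `ℝ → ℝ → ℝ`. -/
noncomputable def pdx (f : ℝ → ℝ → ℝ) : ℝ → ℝ → ℝ :=
  fun x y => deriv (fun x' => f x' y) x

/-- Partial derivative in the second variable of a curried function `ℝ → ℝ → ℝ`. -/
noncomputable def pdy (f : ℝ → ℝ → ℝ) : ℝ → ℝ → ℝ :=
  fun x y => deriv (fun y' => f x y') y

/-- The Killing system for the metric `g = (2/(x²+y²−2h)²)·diag(1, 1/μ)` on `ℝ²`:
(i) `∂ᵧξ¹ + (1/μ)∂ₓξ² = 0`;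
(ii) `−4(xξ¹ + yξ²)/(x²+y²−2h) + 2∂ₓξ¹ = 0`;
(iii) `−4(xξ¹ + yξ²)/(x²+y²−2h) + 2∂ᵧξ² = 0`. -/
def KillingSystem (μ h : ℝ) (ξ1 ξ2 : ℝ → ℝ → ℝ) : Prop :=
  ∀ x y : ℝ,
    pdy ξ1 x y + (1 / μ) * pdx ξ2 x y = 0 ∧
    -4 * (x * ξ1 x y + y * ξ2 x y) / (x ^ 2 + y ^ 2 - 2 * h) + 2 * pdx ξ1 x y = 0 ∧
    -4 * (x * ξ1 x y + y * ξ2 x y) / (x ^ 2 + y ^ 2 - 2 * h) + 2 * pdy ξ2 x y = 0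

section helpers

variable (f : ℝ → ℝ → ℝ)

lemma slice_x_hasDerivAt {F : ℝ × ℝ → ℝ} (hF : Differentiable ℝ F) (x y : ℝ) :
    HasDerivAt (fun x' => F (x', y)) (fderiv ℝ F (x, y) (1, 0)) x := by
  have h1 : HasDerivAt (fun x' : ℝ => (x', y)) ((1 : ℝ), (0 : ℝ)) x :=
    (hasDerivAt_id x).prodMk (hasDerivAt_const x y)
  exact ((hF (x, y)).hasFDerivAt.comp_hasDerivAt x h1)

lemma slice_y_hasDerivAt {F : ℝ × ℝ → ℝ} (hF : Differentiable ℝ F) (x y : ℝ) :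
    HasDerivAt (fun y' => F (x, y')) (fderiv ℝ F (x, y) (0, 1)) y := by
  have h1 : HasDerivAt (fun y' : ℝ => (x, y')) ((0 : ℝ), (1 : ℝ)) y :=
    (hasDerivAt_const y x).prodMk (hasDerivAt_id y)
  exact ((hF (x, y)).hasFDerivAt.comp_hasDerivAt y h1)

lemma pdx_hasDerivAt (hf : ContDiff ℝ 2 (fun p : ℝ × ℝ => f p.1 p.2)) (x y : ℝ) :
    HasDerivAt (fun x' => f x' y) (pdx f x y) x := by
  have := slice_x_hasDerivAt (F := fun p : ℝ × ℝ => f p.1 p.2)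
    (hf.differentiable (by norm_num)) x y
  simpa [pdx, this.deriv] using this

lemma pdy_hasDerivAt (hf : ContDiff ℝ 2 (fun p : ℝ × ℝ => f p.1 p.2)) (x y : ℝ) :
    HasDerivAt (fun y' => f x y') (pdy f x y) y := by
  have := slice_y_hasDerivAt (F := fun p : ℝ × ℝ => f p.1 p.2)
    (hf.differentiable (by norm_num)) x y
  simpa [pdy, this.deriv] using this

/-- Clairaut (symmetry of mixed partials) for curried C² functions. -/
lemma mixed_symm (hf : ContDiff ℝ 2 (fun p : ℝ × ℝ => f p.1 p.2)) (x y : ℝ) :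
    pdy (pdx f) x y = pdx (pdy f) x y := by
  set F : ℝ × ℝ → ℝ := fun p => f p.1 p.2 with hFdef
  have hFd : Differentiable ℝ F := hf.differentiable (by norm_num)
  have hf' : ContDiff ℝ 1 (fderiv ℝ F) := hf.fderiv_right (by norm_num)
  have hf'd : Differentiable ℝ (fderiv ℝ F) := hf'.differentiable (by norm_num)
  set f'' := fderiv ℝ (fderiv ℝ F) (x, y) with hf''def
  have hsymm : ∀ v w, f'' v w = f'' w v := by
    intro v w
    exact second_derivative_symmetric (fun p => (hFd p).hasFDerivAt)
      (hf'd (x, y)).hasFDerivAt v w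
  have key : ∀ v : ℝ × ℝ,
      HasFDerivAt (fun p : ℝ × ℝ => fderiv ℝ F p v)
        ((ContinuousLinearMap.apply ℝ ℝ v).comp f'') (x, y) := by
    intro v
    exact (ContinuousLinearMap.apply ℝ ℝ v).hasFDerivAt.comp (x, y)
      (hf'd (x, y)).hasFDerivAt
  have h1 : pdy (pdx f) x y = f'' (0, 1) (1, 0) := by
    have heq : (fun y' => pdx f x y') = fun y' => fderiv ℝ F (x, y') (1, 0) := by
      funext y'
      have := slice_x_hasDerivAt hFd x y'
      simpa [pdx] using this.deriv
    have h2 : HasDerivAt (fun y' : ℝ => (x, y')) ((0 : ℝ), (1 : ℝ)) y :=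
      (hasDerivAt_const y x).prodMk (hasDerivAt_id y)
    have h3 := ((key ((1 : ℝ), (0 : ℝ))).comp_hasDerivAt y h2)
    simpa [pdy, heq, Function.comp_def] using h3.deriv
  have h4 : pdx (pdy f) x y = f'' (1, 0) (0, 1) := by
    have heq : (fun x' => pdy f x' y) = fun x' => fderiv ℝ F (x', y) (0, 1) := by
      funext x'
      have := slice_y_hasDerivAt hFd x' y
      simpa [pdy] using this.deriv
    have h2 : HasDerivAt (fun x' : ℝ => (x', y)) ((1 : ℝ), (0 : ℝ)) x :=
      (hasDerivAt_id x).prodMk (hasDerivAt_const x y)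
    have h3 := ((key ((0 : ℝ), (1 : ℝ))).comp_hasDerivAt x h2)
    simpa [pdx, heq, Function.comp_def] using h3.deriv
  rw [h1, h4, hsymm]

end helpers


/-- **Second-order equations satisfied by the components of a Killing field**
of the metric `g = (2/(x²+y²−2h)²)·diag(1, 1/μ)` on `ℝ²`:
`2μ(x²+y²−2h)·∂ᵧᵧξ¹ − 4μy·∂ᵧξ¹ + 4ξ¹ = 0` and
`(2/μ)(x²+y²−2h)·∂ₓₓξ² − (4/μ)x·∂ₓξ² + 4ξ² = 0`. -/
theorem killing_field_second_order_equations
    (μ h : ℝ) (hμ : 1 < μ) (hh : h < 0)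
    (ξ1 ξ2 : ℝ → ℝ → ℝ)
    (hξ1 : ContDiff ℝ 2 (fun p : ℝ × ℝ => ξ1 p.1 p.2))
    (hξ2 : ContDiff ℝ 2 (fun p : ℝ × ℝ => ξ2 p.1 p.2))
    (hK : KillingSystem μ h ξ1 ξ2) :
    ∀ x y : ℝ,
      2 * μ * (x ^ 2 + y ^ 2 - 2 * h) * pdy (pdy ξ1) x y
        - 4 * μ * y * pdy ξ1 x y + 4 * ξ1 x y = 0 ∧
      (2 / μ) * (x ^ 2 + y ^ 2 - 2 * h) * pdx (pdx ξ2) x y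
        - (4 / μ) * x * pdx ξ2 x y + 4 * ξ2 x y = 0 := by
  have hμ0 : μ ≠ 0 := by linarith
  have hDpos : ∀ a b : ℝ, 0 < a ^ 2 + b ^ 2 - 2 * h := by
    intro a b; nlinarith [sq_nonneg a, sq_nonneg b]
  have hDne : ∀ a b : ℝ, a ^ 2 + b ^ 2 - 2 * h ≠ 0 := fun a b => (hDpos a b).ne'
  -- rearranged Killing equations
  have hE1 : ∀ a b : ℝ, pdx ξ2 a b = -μ * pdy ξ1 a b := by
    intro a b
    have := (hK a b).1
    field_simp at this
    linarith
  have hE2 : ∀ a b : ℝ, pdx ξ1 a b =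
      2 * (a * ξ1 a b + b * ξ2 a b) / (a ^ 2 + b ^ 2 - 2 * h) := by
    intro a b
    have h0 := (hK a b).2.1
    have hD := hDne a b
    field_simp at h0 ⊢
    linarith
  have hE3 : ∀ a b : ℝ, pdy ξ2 a b =
      2 * (a * ξ1 a b + b * ξ2 a b) / (a ^ 2 + b ^ 2 - 2 * h) := by
    intro a b
    have h0 := (hK a b).2.2
    have hD := hDne a b
    field_simp at h0 ⊢
    linarith
  intro x y
  set D : ℝ := x ^ 2 + y ^ 2 - 2 * h with hDdef
  have hD : D ≠ 0 := hDne x y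
  have hd1x := pdx_hasDerivAt ξ1 hξ1
  have hd2x := pdx_hasDerivAt ξ2 hξ2
  have hd1y := pdy_hasDerivAt ξ1 hξ1
  have hd2y := pdy_hasDerivAt ξ2 hξ2
  constructor
  · -- first equation
    have key : pdy (pdy ξ1) x y = -(1 / μ) * pdx (pdy ξ2) x y := by
      have heq : (fun y' => pdy ξ1 x y') = fun y' => -(1 / μ) * pdx ξ2 x y' := by
        funext y'
        have := (hK x y').1
        linarith
      rw [show pdy (pdy ξ1) x y = deriv (fun y' => pdy ξ1 x y') y from rfl, heq,
        deriv_const_mul_field]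
      rw [show deriv (fun y' => pdx ξ2 x y') y = pdy (pdx ξ2) x y from rfl,
        mixed_symm ξ2 hξ2]
    have hcomp : pdx (pdy ξ2) x y =
        (2 * (ξ1 x y + x * pdx ξ1 x y + y * pdx ξ2 x y) * D
          - 2 * (x * ξ1 x y + y * ξ2 x y) * (2 * x)) / D ^ 2 := by
      have heq : (fun x' => pdy ξ2 x' y) =
          fun x' => 2 * (x' * ξ1 x' y + y * ξ2 x' y) / (x' ^ 2 + y ^ 2 - 2 * h) := by
        funext x'; exact hE3 x' y
      have hN : HasDerivAt (fun x' => 2 * (x' * ξ1 x' y + y * ξ2 x' y))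
          (2 * (ξ1 x y + x * pdx ξ1 x y + y * pdx ξ2 x y)) x := by
        have := (((hasDerivAt_id x).mul (hd1x x y)).add
          ((hd2x x y).const_mul y)).const_mul 2
        refine this.congr_deriv ?_
        simp only [id_eq]
        ring
      have hDen : HasDerivAt (fun x' : ℝ => x' ^ 2 + y ^ 2 - 2 * h) (2 * x) x := by
        have := ((hasDerivAt_pow 2 x).add_const (y ^ 2)).sub_const (2 * h)
        simpa using this
      have hQ := hN.div hDen hD
      rw [show pdx (pdy ξ2) x y = deriv (fun x' => pdy ξ2 x' y) x from rfl, heq]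
      exact hQ.deriv
    rw [key, hcomp, hE1 x y, hE2 x y]
    have hE2' : pdx ξ1 x y = 2 * (x * ξ1 x y + y * ξ2 x y) / D := hE2 x y
    rw [← hDdef]
    field_simp
    ring
  · -- second equation
    have key : pdx (pdx ξ2) x y = -μ * pdy (pdx ξ1) x y := by
      have heq : (fun x' => pdx ξ2 x' y) = fun x' => -μ * pdy ξ1 x' y := by
        funext x'; exact hE1 x' y
      rw [show pdx (pdx ξ2) x y = deriv (fun x' => pdx ξ2 x' y) x from rfl, heq,
        deriv_const_mul_field]
      rw [show deriv (fun x' => pdy ξ1 x' y) x = pdx (pdy ξ1) x y from rfl,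
        ← mixed_symm ξ1 hξ1]
    have hcomp : pdy (pdx ξ1) x y =
        (2 * (x * pdy ξ1 x y + ξ2 x y + y * pdy ξ2 x y) * D
          - 2 * (x * ξ1 x y + y * ξ2 x y) * (2 * y)) / D ^ 2 := by
      have heq : (fun y' => pdx ξ1 x y') =
          fun y' => 2 * (x * ξ1 x y' + y' * ξ2 x y') / (x ^ 2 + y' ^ 2 - 2 * h) := by
        funext y'; exact hE2 x y'
      have hN : HasDerivAt (fun y' => 2 * (x * ξ1 x y' + y' * ξ2 x y'))
          (2 * (x * pdy ξ1 x y + ξ2 x y + y * pdy ξ2 x y)) y := by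
        have := (((hd1y x y).const_mul x).add
          ((hasDerivAt_id y).mul (hd2y x y))).const_mul 2
        refine this.congr_deriv ?_
        simp only [id_eq]
        ring
      have hDen : HasDerivAt (fun y' : ℝ => x ^ 2 + y' ^ 2 - 2 * h) (2 * y) y := by
        have := (((hasDerivAt_pow 2 y).const_add (x ^ 2)).sub_const (2 * h))
        simpa using this
      have hQ := hN.div hDen hD
      rw [show pdy (pdx ξ1) x y = deriv (fun y' => pdx ξ1 x y') y from rfl, heq]
      exact hQ.deriv
    rw [key, hcomp, hE3 x y]
    have hE1' : pdy ξ1 x y = -(1 / μ) * pdx ξ2 x y := by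
      have := (hK x y).1; linarith
    rw [hE1']
    rw [← hDdef]
    field_simp
    ring
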